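/- Let p < q be positions of w, so that the block b₀ = w[p,q) is nonempty, and let p_i := par^i(p) and q_i := par^i(q) be the i-th iterated parents. Then there exists k ∈ ℕ such that: p_j < q_j for all j ≤ k; p_j = q_j for all j > k; and the block w[p_k, q_k) is either the single-letter word [0] or the single-letter word [4]. -/
import Mathlib


/-- The morphism φ on letters: φ(0)=03, φ(1)=43, φ(3)=1, φ(4)=01. -/
def phiLetter : ℕ → List ℕ
  | 0 => [0, 3]
  | 1 => [4, 3]
  | 3 => [1]
  | 4 => [0, 1]
  | _ => []

/-- The morphism φ on words, applied letterwise and concatenated. -/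
def phi (x : List ℕ) : List ℕ := x.flatMap phiLetter

/-- The fixed point `w` of φ beginning with 0: `w n` is the `n`-th letter of
`φ^k([0])` for any `k` with `|φ^k([0])| > n` (e.g. `k = n+1`). -/
def w (n : ℕ) : ℕ := (phi^[n + 1] [0]).getD n 0

/-- The factor `w[p, q) = (w p, …, w (q-1))`. -/
def factorW (p q : ℕ) : List ℕ := (List.range' p (q - p)).map w

/-- The Parikh map ψ, sending a word over `{0,1,3,4}` to `(|x|₀,|x|₁,|x|₃,|x|₄) ∈ ℤ⁴`. -/
def psi (x : List ℕ) : Fin 4 → ℤ :=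
  ![(x.count 0 : ℤ), (x.count 1 : ℤ), (x.count 3 : ℤ), (x.count 4 : ℤ)]

/-- The incidence matrix of φ. -/
def M : Matrix (Fin 4) (Fin 4) ℤ :=
  !![1, 0, 0, 1; 0, 0, 1, 1; 1, 1, 0, 0; 0, 1, 0, 0]

/-- `η(p) = |φ(w[0,p))|`. -/
def eta (p : ℕ) : ℕ := (phi ((List.range p).map w)).length

/-- `σ(p) = ψ(w[0,p))`, the Parikh vector of the prefix of `w` of length `p`. -/
def sigmaW (p : ℕ) : Fin 4 → ℤ := psi ((List.range p).map w)

/-- The parent of a position `x`: the unique `t` with `η(t) ≤ x < η(t+1)`. -/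
def par (x : ℕ) : ℕ := Nat.findGreatest (fun t => eta t ≤ x) x

-- basics
lemma phi_append (a b : List ℕ) : phi (a ++ b) = phi a ++ phi b := by
  simp [phi]

lemma phi_cons (a : ℕ) (l : List ℕ) : phi (a :: l) = phiLetter a ++ phi l := by
  simp [phi]

lemma phi_prefix {a b : List ℕ} (h : a <+: b) : phi a <+: phi b := by
  obtain ⟨t, rfl⟩ := h
  exact ⟨phi t, (phi_append a t).symm⟩

def W (k : ℕ) : List ℕ := phi^[k] [0]

lemma W_succ (k : ℕ) : W (k + 1) = phi (W k) := Function.iterate_succ_apply' _ _ _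

lemma W_prefix_succ (k : ℕ) : W k <+: W (k + 1) := by
  induction k with
  | zero => exact ⟨[3], rfl⟩
  | succ n ih => rw [W_succ, W_succ]; exact phi_prefix ih

lemma W_prefix {k m : ℕ} (h : k ≤ m) : W k <+: W m := by
  induction m with
  | zero => simp_all
  | succ n ih =>
    rcases Nat.lt_or_ge k (n+1) with h' | h'
    · exact (ih (Nat.lt_succ_iff.mp h')).trans (W_prefix_succ n)
    · have : k = n + 1 := le_antisymm h h'
      subst this; exact List.prefix_refl _

def inSig (a : ℕ) : Prop := a = 0 ∨ a = 1 ∨ a = 3 ∨ a = 4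

lemma inSig_phiLetter {a : ℕ} (h : inSig a) : ∀ b ∈ phiLetter a, inSig b := by
  rcases h with rfl | rfl | rfl | rfl <;> simp [phiLetter, inSig]

lemma inSig_W {k : ℕ} : ∀ a ∈ W k, inSig a := by
  induction k with
  | zero => intro a ha; simp [W] at ha; subst ha; left; rfl
  | succ n ih =>
    intro a ha
    rw [W_succ] at ha
    simp only [phi, List.mem_flatMap] at ha
    obtain ⟨b, hb, hab⟩ := ha
    exact inSig_phiLetter (ih b hb) a hab

lemma phiLetter_len {a : ℕ} (h : inSig a) :
    1 ≤ (phiLetter a).length ∧ (phiLetter a).length ≤ 2 := by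
  rcases h with rfl | rfl | rfl | rfl <;> simp [phiLetter]

lemma phi_length_ge (l : List ℕ) (h : ∀ a ∈ l, inSig a) : l.length ≤ (phi l).length := by
  induction l with
  | nil => simp [phi]
  | cons a t ih =>
    rw [phi_cons]
    simp only [List.length_append, List.length_cons]
    have h1 := (phiLetter_len (h a (by simp))).1
    have h2 := ih (fun b hb => h b (by simp [hb]))
    omega

lemma W_head (k : ℕ) : ∃ l, W k = 0 :: l := by
  obtain ⟨t, ht⟩ := W_prefix (Nat.zero_le k)
  exact ⟨t, by rw [← ht]; rfl⟩

lemma W_length (k : ℕ) : k + 1 ≤ (W k).length := by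
  induction k with
  | zero => simp [W]
  | succ n ih =>
    obtain ⟨l, hl⟩ := W_head n
    have hls : ∀ a ∈ l, inSig a := fun a ha => inSig_W a (by rw [hl]; simp [ha])
    have := phi_length_ge l hls
    rw [W_succ, hl, phi_cons]
    simp only [List.length_append]
    have : (phiLetter 0).length = 2 := rfl
    have hll : n + 1 ≤ l.length + 1 := by rw [hl] at ih; simpa using ih
    omega

lemma w_eq {m n : ℕ} (h : n < (W m).length) : w n = (W m)[n]! := by
  have hn : n < (W (n + 1)).length := lt_of_lt_of_le (by omega) (W_length (n+1))
  rcases Nat.le_total (n+1) m with hle | hle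
  · obtain ⟨t, ht⟩ := W_prefix hle
    show (W (n+1)).getD n 0 = _
    rw [List.getD_eq_getElem _ _ hn, getElem!_pos (W m) n h]
    exact List.IsPrefix.getElem ⟨t, ht⟩ hn
  · obtain ⟨t, ht⟩ := W_prefix hle
    show (W (n+1)).getD n 0 = _
    rw [List.getD_eq_getElem _ _ hn, getElem!_pos (W m) n h]
    exact (List.IsPrefix.getElem ⟨t, ht⟩ h).symm

lemma range_map_w {m p : ℕ} (h : p ≤ (W m).length) :
    (List.range p).map w = (W m).take p := by
  apply List.ext_getElem
  · simp [h]
  · intro i h1 h2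
    simp only [List.getElem_map, List.getElem_range, List.getElem_take]
    have hi : i < (W m).length := lt_of_lt_of_le (by simpa using h1) h
    rw [w_eq hi, getElem!_pos (W m) i hi]

lemma inSig_w (n : ℕ) : inSig (w n) := by
  have h : n < (W (n+1)).length := lt_of_lt_of_le (by omega) (W_length (n+1))
  rw [w_eq h]
  exact inSig_W _ (by rw [getElem!_pos (W (n+1)) n h]; exact List.getElem_mem h)

lemma eta_zero : eta 0 = 0 := rfl

lemma eta_succ (p : ℕ) : eta (p + 1) = eta p + (phiLetter (w p)).length := by
  unfold eta
  rw [List.range_succ, List.map_append, phi_append]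
  simp [phi]

lemma eta_succ_lb (p : ℕ) : eta p + 1 ≤ eta (p + 1) := by
  have := (phiLetter_len (inSig_w p)).1
  rw [eta_succ]; omega

lemma eta_succ_ub (p : ℕ) : eta (p + 1) ≤ eta p + 2 := by
  have := (phiLetter_len (inSig_w p)).2
  rw [eta_succ]; omega

lemma eta_mono : StrictMono eta :=
  strictMono_nat_of_lt_succ (fun n => eta_succ_lb n)

lemma w_zero : w 0 = 0 := rfl

lemma eta_gt (p : ℕ) (hp : 1 ≤ p) : p + 1 ≤ eta p := by
  induction p with
  | zero => omega
  | succ n ih =>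
    rcases Nat.eq_zero_or_pos n with rfl | hn
    · have : eta (0+1) = 2 := rfl
      omega
    · have := eta_succ_lb n
      have := ih hn
      omega

-- key fixed point identity: prefix of w of length eta p = phi (prefix of length p)
lemma phi_prefix_w (p : ℕ) :
    (List.range (eta p)).map w = phi ((List.range p).map w) := by
  have hp : p ≤ (W p).length := le_trans (by omega) (W_length p)
  have h1 : (List.range p).map w = (W p).take p := range_map_w hp
  have h2 : phi ((W p).take p) <+: W (p + 1) := by
    rw [W_succ]; exact phi_prefix (List.take_prefix _ _)
  have hlen : (phi ((W p).take p)).length = eta p := by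
    rw [← h1]; rfl
  have h3 : eta p ≤ (W (p+1)).length := hlen ▸ h2.length_le
  rw [range_map_w h3, h1]
  obtain ⟨t, ht⟩ := h2
  rw [← ht, ← hlen, List.take_left]

lemma factor_eta (t : ℕ) :
    (List.range' (eta t) (eta (t+1) - eta t)).map w = phiLetter (w t) := by
  have h1 := phi_prefix_w (t + 1)
  have h2 : phi ((List.range (t+1)).map w)
      = phi ((List.range t).map w) ++ phiLetter (w t) := by
    rw [List.range_succ, List.map_append, phi_append]; simp [phi]
  have h3 : eta (t+1) = eta t + (eta (t+1) - eta t) := by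
    have := eta_succ_lb t; omega
  have h4 : (List.range (eta (t+1))).map w
      = (List.range (eta t)).map w ++ (List.range' (eta t) (eta (t+1) - eta t)).map w := by
    rw [h3, List.range_add, List.map_append, List.map_map]
    congr 1
    rw [List.range'_eq_map_range]
    simp [Function.comp]
  rw [h4, h2, phi_prefix_w t] at h1
  exact List.append_cancel_left h1

lemma eta_le_par (x : ℕ) : eta (par x) ≤ x := by
  unfold par
  exact Nat.findGreatest_spec (P := fun t => eta t ≤ x) (Nat.zero_le x) (by simp [eta_zero])

lemma par_le (x : ℕ) : par x ≤ x := Nat.findGreatest_le x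

lemma lt_eta_par_succ (x : ℕ) : x < eta (par x + 1) := by
  rcases Nat.lt_or_ge x (par x + 1) with h | h
  · have h2 : par x ≤ x := par_le x
    have h3 : par x = x := by omega
    have := eta_gt (x+1) (by omega)
    rw [h3]; omega
  · by_contra hc
    have := Nat.findGreatest_is_greatest (P := fun t => eta t ≤ x) (n := x)
      (Nat.lt_succ_self (par x)) h
    simp only [Nat.succ_eq_add_one] at this
    exact this (by omega)

lemma par_mono {x y : ℕ} (h : x ≤ y) : par x ≤ par y :=
  Nat.le_findGreatest (le_trans (par_le x) h) (le_trans (eta_le_par x) h)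

lemma par_lt {x : ℕ} (h : 1 ≤ x) : par x < x := by
  rcases Nat.lt_or_ge (par x) x with h' | h'
  · exact h'
  · have h2 : par x = x := le_antisymm (par_le x) h'
    have h3 := eta_le_par x
    rw [h2] at h3
    have := eta_gt x h
    omega

lemma iter_par_le (x j : ℕ) : par^[j] x ≤ x - j := by
  induction j with
  | zero => simp
  | succ n ih =>
    rw [Function.iterate_succ_apply']
    rcases Nat.eq_zero_or_pos (par^[n] x) with h | h
    · rw [h]; simp [par, eta_zero]
    · have := par_lt h
      omega

lemma iter_par_mono {x y : ℕ} (h : x ≤ y) (j : ℕ) : par^[j] x ≤ par^[j] y := by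
  induction j with
  | zero => simpa
  | succ n ih => rw [Function.iterate_succ_apply', Function.iterate_succ_apply']; exact par_mono ih

/-- For a nonempty block `w[p,q)` with ancestral position sequences
`pᵢ = parⁱ(p)`, `qᵢ = parⁱ(q)`, there is a `k` such that `pⱼ < qⱼ` for `j ≤ k`,
`pⱼ = qⱼ` for `j > k`, and `w[p_k, q_k)` is `[0]` or `[4]`. -/
theorem last_nonempty_ancestor (p q : ℕ) (hpq : p < q) :
    ∃ k : ℕ,
      (∀ j ≤ k, par^[j] p < par^[j] q) ∧
      (∀ j, k < j → par^[j] p = par^[j] q) ∧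
      (factorW (par^[k] p) (par^[k] q) = [0] ∨ factorW (par^[k] p) (par^[k] q) = [4]) := by
  classical
  set P : ℕ → Prop := fun j => par^[j] p < par^[j] q with hPdef
  have hP0 : P 0 := hpq
  have hnPq : ¬ P q := by
    have h1 := iter_par_le q q
    have h2 := iter_par_mono (le_of_lt hpq) q
    simp only [hPdef]
    omega
  set k := Nat.findGreatest P q with hk
  have hPk : P k := Nat.findGreatest_spec (Nat.zero_le q) hP0
  have hkq : k < q := by
    rcases Nat.lt_or_ge k q with h | h
    · exact h
    · exfalso; apply hnPq
      have : k ≤ q := Nat.findGreatest_le q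
      have : k = q := by omega
      rwa [← this]
  have hnext : par^[k+1] p = par^[k+1] q := by
    have hle := iter_par_mono (le_of_lt hpq) (k+1)
    have : ¬ P (k+1) := Nat.findGreatest_is_greatest (Nat.lt_succ_self k) (by omega)
    simp only [hPdef] at this
    omega
  refine ⟨k, ?_, ?_, ?_⟩
  · -- ∀ j ≤ k, strict
    intro j hj
    rcases Nat.lt_or_ge (par^[j] p) (par^[j] q) with h | h
    · exact h
    · exfalso
      have heq : par^[j] p = par^[j] q := le_antisymm (iter_par_mono (le_of_lt hpq) j) h
      have : par^[k] p = par^[k] q := by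
        have h1 : par^[k] p = par^[k - j] (par^[j] p) := by
          rw [← Function.iterate_add_apply]; congr 1; omega
        have h2 : par^[k] q = par^[k - j] (par^[j] q) := by
          rw [← Function.iterate_add_apply]; congr 1; omega
        rw [h1, h2, heq]
      simp only [hPdef] at hPk
      omega
  · -- ∀ j > k, equal
    intro j hj
    have h1 : par^[j] p = par^[j - (k+1)] (par^[k+1] p) := by
      rw [← Function.iterate_add_apply]; congr 1; omega
    have h2 : par^[j] q = par^[j - (k+1)] (par^[k+1] q) := by
      rw [← Function.iterate_add_apply]; congr 1; omega
    rw [h1, h2, hnext]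
  · -- the factor
    set a := par^[k] p with ha
    set b := par^[k] q with hb
    have hab : a < b := hPk
    set t := par a with ht
    have hpar : par a = par b := by
      have := hnext
      rw [Function.iterate_succ_apply', Function.iterate_succ_apply'] at this
      exact this
    have h1 : eta t ≤ a := eta_le_par a
    have h2 : b < eta (t + 1) := by rw [ht, hpar]; exact lt_eta_par_succ b
    have h3 : eta (t+1) ≤ eta t + 2 := eta_succ_ub t
    have hae : a = eta t := by omega
    have hbe : b = eta t + 1 := by omega
    have hetat : eta (t+1) = eta t + 2 := by omega
    have hlen : (phiLetter (w t)).length = 2 := by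
      have := eta_succ t; omega
    have hfac := factor_eta t
    rw [hetat] at hfac
    have hfac2 : [w (eta t), w (eta t + 1)] = phiLetter (w t) := by
      have : eta t + 2 - eta t = 2 := by omega
      rw [this] at hfac
      simpa [List.range'] using hfac
    have hfw : factorW a b = [w (eta t)] := by
      rw [hae, hbe]
      simp [factorW, List.range']
    rw [hfw]
    rcases inSig_w t with h | h | h | h <;> rw [h] at hfac2 hlen
    · left; rw [show phiLetter 0 = [0,3] from rfl] at hfac2
      simp at hfac2; simp [hfac2.1]
    · right; rw [show phiLetter 1 = [4,3] from rfl] at hfac2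
      simp at hfac2; simp [hfac2.1]
    · exfalso; simp [phiLetter] at hlen
    · left; rw [show phiLetter 4 = [0,1] from rfl] at hfac2
      simp at hfac2; simp [hfac2.1]
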